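/- arXiv:1806.01636 — 2 statements merged into one kernel-verified Lean document; each statement's English description precedes it below -/
import Mathlib

section
/- (In classical logic.) Let f be a function from the point set of a natural space 𝒱 to the point set of a basic neighborhood space 𝒲 that is continuous with respect to the natural topologies and respects ≡ (x ≡ y implies f(x) ≡ f(y)). Then there is a natural morphism g from 𝒱 to 𝒲 such that f(x) ≡ g(x) for all points x of 𝒱. -/
/-! # Natural Topology: basic framework (Waaldijk) -/

/-- A pre-natural space: a countable set of basic dots with a decidable
pre-apartness `apart` and a decidable refinement partial order `refines`. -/
structure PreNaturalSpace (V : Type) : Type where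
  countable' : Countable V
  apart : V → V → Prop
  refines : V → V → Prop
  apart_dec : DecidableRel apart
  refines_dec : DecidableRel refines
  apart_symm : ∀ a b, apart a b → apart b a
  apart_irrefl : ∀ a, ¬ apart a a
  apart_mono : ∀ a b c, refines a b → apart c b → apart c a
  refines_refl : ∀ a, refines a a
  refines_trans : ∀ a b c, refines a b → refines b c → refines a c
  refines_antisymm : ∀ a b, refines a b → refines b a → a = b

namespace PreNaturalSpace

variable {V W : Type}

/-- `a ≺ b` : strict refinement. -/
def strict (P : PreNaturalSpace V) (a b : V) : Prop := P.refines a b ∧ a ≠ b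

/-- A point is a shrinking sequence of dots deciding every apart pair of dots. -/
structure IsPoint (P : PreNaturalSpace V) (p : ℕ → V) : Prop where
  mono : ∀ n, P.refines (p (n + 1)) (p n)
  shrink : ∀ n, ∃ m, P.strict (p m) (p n)
  decides : ∀ a b, P.apart a b → ∃ m, P.apart (p m) a ∨ P.apart (p m) b

/-- The set of points of a pre-natural space. -/
def Pt (P : PreNaturalSpace V) : Type := { p : ℕ → V // P.IsPoint p }

/-- `p` begins with the dot `a` : some `p m ≺ a`. -/
def begins (P : PreNaturalSpace V) (p : ℕ → V) (a : V) : Prop := ∃ m, P.strict (p m) a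

/-- Apartness between a dot and a point. -/
def dApart (P : PreNaturalSpace V) (a : V) (p : ℕ → V) : Prop := ∃ m, P.apart (p m) a

/-- Apartness between points. -/
def pApart (P : PreNaturalSpace V) (p q : P.Pt) : Prop := ∃ n, P.apart (p.1 n) (q.1 n)

/-- Equivalence of points: the negation of apartness. -/
def pEquiv (P : PreNaturalSpace V) (p q : P.Pt) : Prop := ¬ P.pApart p q

variable (P : PreNaturalSpace V)

lemma refines_of_le {p : ℕ → V} (hp : ∀ n, P.refines (p (n + 1)) (p n)) :
    ∀ {m k : ℕ}, m ≤ k → P.refines (p k) (p m) := by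
  intro m k h
  induction h with
  | refl => exact P.refines_refl _
  | step h ih => exact P.refines_trans _ _ _ (hp _) ih

lemma begins_mono {z : ℕ → V} (hz : P.IsPoint z) {a b : V} (hab : P.refines a b)
    (h : P.begins z a) : P.begins z b := by
  obtain ⟨j, hj1, hj2⟩ := h
  have hzb : P.refines (z j) b := P.refines_trans _ _ _ hj1 hab
  by_cases he : z j = b
  · obtain ⟨i, hi1, hi2⟩ := hz.shrink j
    exact ⟨i, P.refines_trans _ _ _ hi1 hzb, fun h' => hi2 (h'.trans he.symm)⟩
  · exact ⟨j, hzb, he⟩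

/-- The natural (apartness) topology as a predicate on subsets of the point set. -/
def NatOpen (U : Set P.Pt) : Prop :=
  ∀ x ∈ U, ∀ y : P.Pt, P.pApart y x ∨ ∃ m, { z : P.Pt | P.begins z.1 (y.1 m) } ⊆ U

instance instTopPt : TopologicalSpace P.Pt where
  IsOpen := P.NatOpen
  isOpen_univ := fun _ _ _ => Or.inr ⟨0, fun _ _ => trivial⟩
  isOpen_inter := by
    intro U U' hU hU' x hx y
    rcases hU x hx.1 y with h | ⟨m, hm⟩
    · exact Or.inl h
    rcases hU' x hx.2 y with h | ⟨k, hk⟩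
    · exact Or.inl h
    refine Or.inr ⟨max m k, fun z hz => ⟨hm ?_, hk ?_⟩⟩
    · exact P.begins_mono z.2 (P.refines_of_le y.2.mono (le_max_left m k)) hz
    · exact P.begins_mono z.2 (P.refines_of_le y.2.mono (le_max_right m k)) hz
  isOpen_sUnion := by
    intro S hS x hx y
    obtain ⟨U, hU, hxU⟩ := hx
    rcases hS U hU x hxU y with h | ⟨m, hm⟩
    · exact Or.inl h
    · exact Or.inr ⟨m, fun z hz => ⟨U, hU, hm hz⟩⟩

lemma pEquiv_refl (p : P.Pt) : P.pEquiv p p := fun ⟨_, h⟩ => P.apart_irrefl _ h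

lemma pEquiv_symm {p q : P.Pt} (h : P.pEquiv p q) : P.pEquiv q p :=
  fun ⟨n, hn⟩ => h ⟨n, P.apart_symm _ _ hn⟩

lemma pEquiv_trans {p q r : P.Pt} (hpq : P.pEquiv p q) (hqr : P.pEquiv q r) :
    P.pEquiv p r := by
  rintro ⟨n, hn⟩
  obtain ⟨m, hm⟩ := q.2.decides (p.1 n) (r.1 n) hn
  rcases hm with hm | hm
  · -- q.1 m apart from p.1 n
    refine hpq ⟨max m n, ?_⟩
    have h1 : P.apart (p.1 n) (q.1 (max m n)) :=
      P.apart_mono _ _ _ (P.refines_of_le q.2.mono (le_max_left m n)) (P.apart_symm _ _ hm)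
    have h2 : P.apart (q.1 (max m n)) (p.1 (max m n)) :=
      P.apart_mono _ _ _ (P.refines_of_le p.2.mono (le_max_right m n)) (P.apart_symm _ _ h1)
    exact P.apart_symm _ _ h2
  · refine hqr ⟨max m n, ?_⟩
    have h1 : P.apart (r.1 n) (q.1 (max m n)) :=
      P.apart_mono _ _ _ (P.refines_of_le q.2.mono (le_max_left m n)) (P.apart_symm _ _ hm)
    exact P.apart_mono _ _ _ (P.refines_of_le r.2.mono (le_max_right m n))
      (P.apart_symm _ _ h1)

/-- The setoid of points modulo `≡`. -/
def ptSetoid : Setoid P.Pt :=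
  ⟨P.pEquiv, ⟨P.pEquiv_refl, P.pEquiv_symm, P.pEquiv_trans⟩⟩

/-- `â` : the set of points beginning with the dot `a`. -/
def hatSet (a : V) : Set P.Pt := { p | P.begins p.1 a }

/-- `ā` : the `≡`-closure of `â`. -/
def barSet (a : V) : Set P.Pt := { p | ∃ q : P.Pt, P.begins q.1 a ∧ P.pEquiv p q }

/-- A natural space is basic-open when every `ā` is open. -/
def BasicOpen : Prop := ∀ a : V, IsOpen (P.barSet a)

/-- Existence of a maximal dot. -/
def HasMaxDot : Prop := ∃ m, ∀ a, P.refines a m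

/-- Every basic dot begins at least one point. -/
def AllDotsInhabited : Prop := ∀ a : V, ∃ p : ℕ → V, P.IsPoint p ∧ P.begins p a

/-- The conditions making the point set of a pre-natural space a natural space. -/
def IsNaturalSpace : Prop := P.HasMaxDot ∧ P.AllDotsInhabited

end PreNaturalSpace

/-- A refinement morphism between (pre-)natural spaces: a map on dots sending
points to points and reflecting apartness of points. -/
structure RefMorphism {V W : Type} (P : PreNaturalSpace V) (Q : PreNaturalSpace W) : Type where
  toFun : V → W
  maps_points : ∀ p : ℕ → V, P.IsPoint p → Q.IsPoint (fun n => toFun (p n))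
  reflects_apart : ∀ p q : ℕ → V, P.IsPoint p → P.IsPoint q →
    (∃ n, Q.apart (toFun (p n)) (toFun (q n))) → ∃ n, P.apart (p n) (q n)

/-- The induced map on points of a refinement morphism. -/
def RefMorphism.pointMap {V W : Type} {P : PreNaturalSpace V} {Q : PreNaturalSpace W}
    (f : RefMorphism P Q) (p : P.Pt) : Q.Pt :=
  ⟨fun n => f.toFun (p.1 n), f.maps_points p.1 p.2⟩

namespace PreNaturalSpace

variable {V W : Type} (P : PreNaturalSpace V)

/-- Restriction of a pre-natural space to a subset of dots. -/
noncomputable def restrict (S : Set V) : PreNaturalSpace S where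
  countable' := by haveI := P.countable'; exact inferInstance
  apart a b := P.apart a.1 b.1
  refines a b := P.refines a.1 b.1
  apart_dec := Classical.decRel _
  refines_dec := Classical.decRel _
  apart_symm _ _ h := P.apart_symm _ _ h
  apart_irrefl a := P.apart_irrefl a.1
  apart_mono _ _ _ h1 h2 := P.apart_mono _ _ _ h1 h2
  refines_refl a := P.refines_refl a.1
  refines_trans _ _ _ h1 h2 := P.refines_trans _ _ _ h1 h2
  refines_antisymm _ _ h1 h2 := Subtype.ext (P.refines_antisymm _ _ h1 h2)

/-! ## Trail spaces -/

/-- A `≺`-trail: a finite strictly refining sequence `a₀ ≻ a₁ ≻ …`. -/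
def Trail : Type := { l : List V // l.Chain' fun a b => P.strict b a }

lemma strict_trans_flip : Transitive (fun a b : V => P.strict b a) := by
  rintro a b c ⟨h1, h1'⟩ ⟨h2, h2'⟩
  refine ⟨P.refines_trans _ _ _ h2 h1, fun he => ?_⟩
  exact h2' (P.refines_antisymm _ _ h2 (he ▸ h1))

lemma last_refines_of_prefix {a b : List V}
    (ha : a.Chain' fun x y => P.strict y x) (hpre : b <+: a)
    {x y : V} (hx : x ∈ a.getLast?) (hy : y ∈ b.getLast?) :
    P.refines x y := by
  haveI : IsTrans V (fun x y : V => P.strict y x) := ⟨fun _ _ _ h1 h2 => P.strict_trans_flip h1 h2⟩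
  have hpw : a.Pairwise fun x y => P.strict y x := List.isChain_iff_pairwise.mp ha
  obtain ⟨t, rfl⟩ := hpre
  rcases eq_or_ne t [] with rfl | ht
  · rw [List.append_nil] at hx
    have : x = y := by
      rw [Option.mem_def] at hx hy
      exact Option.some_injective _ (hx ▸ hy ▸ rfl)
    exact this ▸ P.refines_refl x
  · rw [List.getLast?_append_of_ne_nil _ ht] at hx
    have hxt : x ∈ t := List.mem_of_mem_getLast? hx
    have hyb : y ∈ b := List.mem_of_mem_getLast? hy
    have := (List.pairwise_append.mp hpw).2.2 y hyb x hxt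
    exact this.1

/-- The trail space of a pre-natural space: dots are `≺`-trails, with
`a ⊑* b` iff `b` is an initial segment of `a`, and `a #* b` iff the last
dots of `a` and `b` are apart. -/
noncomputable def trailSpace : PreNaturalSpace P.Trail where
  countable' := by haveI := P.countable'; exact inferInstanceAs (Countable
    { l : List V // l.Chain' fun a b => P.strict b a })
  apart a b := ∃ x ∈ a.1.getLast?, ∃ y ∈ b.1.getLast?, P.apart x y
  refines a b := b.1 <+: a.1
  apart_dec := Classical.decRel _
  refines_dec := Classical.decRel _
  apart_symm := by
    rintro a b ⟨x, hx, y, hy, hxy⟩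
    exact ⟨y, hy, x, hx, P.apart_symm _ _ hxy⟩
  apart_irrefl := by
    rintro a ⟨x, hx, y, hy, hxy⟩
    rw [Option.mem_def] at hx hy
    have : x = y := Option.some_injective _ (hx ▸ hy ▸ rfl)
    exact P.apart_irrefl x (this ▸ hxy)
  apart_mono := by
    rintro a b c hab ⟨x, hx, y, hy, hxy⟩
    have hbne : b.1 ≠ [] := by
      intro h
      rw [h] at hy
      simp at hy
    have hane : a.1 ≠ [] := by
      intro h
      exact hbne (List.prefix_nil.mp (h ▸ hab))
    obtain ⟨z, hz⟩ : ∃ z, z ∈ a.1.getLast? := by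
      rcases h : a.1.getLast? with _ | z
      · exact absurd (List.getLast?_eq_none_iff.mp h) hane
      · exact ⟨z, rfl⟩
    have hzy : P.refines z y := P.last_refines_of_prefix a.2 hab hz hy
    exact ⟨x, hx, z, hz, P.apart_mono _ _ _ hzy hxy⟩
  refines_refl a := List.prefix_refl a.1
  refines_trans _ _ _ h1 h2 := h2.trans h1
  refines_antisymm a b h1 h2 :=
    Subtype.ext (h2.eq_of_length (le_antisymm h2.length_le h1.length_le))

end PreNaturalSpace

open Classical in
/-- `p♯(n)` : the `≺`-trail obtained from `p₀, …, p_{n-1}` by deleting repetitions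
(for a shrinking sequence `p`, repetitions are consecutive). -/
noncomputable def segList {V : Type} (p : ℕ → V) : ℕ → List V
  | 0 => []
  | n + 1 =>
    if (segList p n).getLast? = some (p n) then segList p n
    else segList p n ++ [p n]

namespace PreNaturalSpace

variable {V W : Type} (P : PreNaturalSpace V)

/-- The map on trail dots sending a nonempty trail to its last element and
the empty trail to `m`. -/
def lastDot (m : V) (q : P.Trail) : V := q.1.getLast?.getD m

/-- `g` is the point map induced by a trail morphism `f` (a refinement morphism
on the trail space): `g p = f (p♯(0)), f (p♯(1)), …`. -/
def InducedByTrailMorphism (Q : PreNaturalSpace W) (f : RefMorphism P.trailSpace Q)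
    (g : P.Pt → Q.Pt) : Prop :=
  ∀ p : P.Pt, ∃ t : P.trailSpace.Pt, (∀ n, (t.1 n).1 = segList p.1 n) ∧ g p = f.pointMap t

/-- `g` is a natural morphism map: induced by a refinement morphism or by a trail morphism. -/
def IsNaturalMorphismMap (Q : PreNaturalSpace W) (g : P.Pt → Q.Pt) : Prop :=
  (∃ f : RefMorphism P Q, ∀ p, g p = f.pointMap p) ∨
  (∃ f : RefMorphism P.trailSpace Q, P.InducedByTrailMorphism Q f g)

/-- Two natural spaces are isomorphic: natural morphisms both ways, inverse up to `≡`. -/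
def AreIsomorphic (Q : PreNaturalSpace W) : Prop :=
  ∃ (f : P.Pt → Q.Pt) (g : Q.Pt → P.Pt),
    P.IsNaturalMorphismMap Q f ∧ Q.IsNaturalMorphismMap P g ∧
    (∀ x, P.pEquiv (g (f x)) x) ∧ (∀ y, Q.pEquiv (f (g y)) y)

/-- A natural space is a basic neighborhood space iff it is isomorphic to a basic-open space. -/
def IsBasicNbhdSpace : Prop :=
  ∃ (W' : Type) (Q : PreNaturalSpace W'), Q.IsNaturalSpace ∧ Q.BasicOpen ∧ P.AreIsomorphic Q

/-! ## Trees, treas, spreads, spraids, fans -/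

/-- `a` is a successor of `c`. -/
def IsSucc (a c : V) : Prop := P.strict a c ∧ ∀ b, P.strict a b → P.refines b c → b = c

/-- A successor-trail (as a list, each entry a successor of the previous one). -/
def SuccChain (l : List V) : Prop := l.Chain' fun x y => P.IsSucc y x

/-- A successor-trail from `m` to `a`. -/
def IsSuccTrailFromTo (m a : V) (l : List V) : Prop :=
  P.SuccChain l ∧ l.head? = some m ∧ l.getLast? = some a

/-- `(V,⊑)` is a tree. -/
def IsTree : Prop :=
  ∃ m, (∀ a, P.refines a m) ∧ ∀ a, ∃! l : List V, P.IsSuccTrailFromTo m a l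

/-- `(V,⊑)` is a trea. -/
def IsTrea : Prop :=
  ∃ m, (∀ a, P.refines a m) ∧ (∀ a, { b | P.refines a b }.Finite) ∧
    ∀ a, ∃ g : ℕ, ∀ l : List V, P.IsSuccTrailFromTo m a l → l.length = g

/-- Every infinite successor-trail is a point. -/
def SuccTrailsArePoints : Prop :=
  ∀ q : ℕ → V, (∀ n, P.IsSucc (q (n + 1)) (q n)) → P.IsPoint q

def IsSpread : Prop := P.IsTree ∧ P.SuccTrailsArePoints

def IsSpraid : Prop := P.IsTrea ∧ P.SuccTrailsArePoints

/-- Finitely branching: every dot has finitely many successors. -/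
def FinBranching : Prop := ∀ a : V, { b | P.IsSucc b a }.Finite

def IsFan : Prop := P.IsSpread ∧ P.FinBranching

def IsFann : Prop := P.IsSpraid ∧ P.FinBranching

end PreNaturalSpace

/-! ## Auxiliary lemmas -/
set_option linter.unusedSectionVars false

namespace PreNaturalSpace

section Basic

variable {V : Type} (P : PreNaturalSpace V)

lemma strict_of_refines_strict {a b c : V} (h1 : P.refines a b) (h2 : P.strict b c) :
    P.strict a c :=
  ⟨P.refines_trans _ _ _ h1 h2.1, fun he => h2.2 (P.refines_antisymm _ _ h2.1 (he ▸ h1))⟩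

lemma strict_of_strict_refines {a b c : V} (h1 : P.strict a b) (h2 : P.refines b c) :
    P.strict a c :=
  ⟨P.refines_trans _ _ _ h1.1 h2, fun he => h1.2 (P.refines_antisymm _ _ h1.1 (he ▸ h2))⟩

lemma not_apart_of_refines {a b : V} (h : P.refines a b) : ¬ P.apart a b :=
  fun hap => P.apart_irrefl a (P.apart_mono a b a h hap)

lemma not_apart_of_common {a b c : V} (hca : P.refines c a) (hcb : P.refines c b) :
    ¬ P.apart a b := by
  intro hap
  have h1 : P.apart b c := P.apart_mono c a b hca (P.apart_symm _ _ hap)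
  exact P.apart_irrefl c (P.apart_mono c b c hcb (P.apart_symm _ _ h1))

lemma apart_le {p : ℕ → V} (hp : ∀ n, P.refines (p (n + 1)) (p n)) {c : V} {n m : ℕ}
    (h : P.apart c (p n)) (hnm : n ≤ m) : P.apart c (p m) :=
  P.apart_mono (p m) (p n) c (P.refines_of_le hp hnm) h

lemma point_begins {p : ℕ → V} (hp : P.IsPoint p) (n : ℕ) : P.begins p (p n) :=
  hp.shrink n

lemma begins_of_max {p : ℕ → V} (hp : P.IsPoint p) {m : V} (hm : ∀ a, P.refines a m) :
    P.begins p m := by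
  obtain ⟨k, hk⟩ := hp.shrink 0
  exact ⟨k, P.strict_of_strict_refines hk (hm (p 0))⟩

lemma mem_barSet_max {m : V} (hm : ∀ a, P.refines a m) (q : P.Pt) : q ∈ P.barSet m :=
  ⟨q, P.begins_of_max q.2 hm, P.pEquiv_refl q⟩

lemma shrink_later {p : ℕ → V} (hp : P.IsPoint p) (n : ℕ) :
    ∃ m, n < m ∧ P.strict (p m) (p n) := by
  obtain ⟨m, hm⟩ := hp.shrink n
  refine ⟨m, ?_, hm⟩
  by_contra h
  push_neg at h
  exact hm.2 (P.refines_antisymm _ _ hm.1 (P.refines_of_le hp.mono h))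

lemma pApart_of_apart {p q : P.Pt} {i j : ℕ} (h : P.apart (p.1 i) (q.1 j)) :
    P.pApart p q := by
  refine ⟨max i j, ?_⟩
  have h1 : P.apart (q.1 j) (p.1 (max i j)) :=
    P.apart_le p.2.mono (P.apart_symm _ _ h) (le_max_left i j)
  exact P.apart_le q.2.mono (P.apart_symm _ _ h1) (le_max_right i j)

lemma pApart_congr_left {p p' q : P.Pt} (h : P.pApart p q) (he : P.pEquiv p p') :
    P.pApart p' q := by
  by_contra h'
  exact (P.pEquiv_trans he h') h

lemma pApart_congr_right {p q q' : P.Pt} (h : P.pApart p q) (he : P.pEquiv q q') :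
    P.pApart p q' := by
  by_contra h'
  exact (P.pEquiv_trans (h' : P.pEquiv p q') (P.pEquiv_symm he)) h

lemma open_saturated {U : Set P.Pt} (hU : IsOpen U) {p q : P.Pt} (hp : p ∈ U)
    (h : P.pEquiv q p) : q ∈ U := by
  have h2 := hU p hp q
  rcases h2 with h2 | ⟨m, hm⟩
  · exact absurd h2 h
  · exact hm (P.point_begins q.2 m)

end Basic

end PreNaturalSpace

/-! ### segList lemmas -/

lemma segList_congr {V : Type} {p q : ℕ → V} {n : ℕ} (h : ∀ i < n, p i = q i) :
    segList p n = segList q n := by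
  induction n with
  | zero => rfl
  | succ n ih =>
    have hih := ih (fun i hi => h i (Nat.lt_succ_of_lt hi))
    rw [segList, segList, hih, h n (Nat.lt_succ_self n)]

lemma segList_getLast {V : Type} (p : ℕ → V) (n : ℕ) :
    (segList p (n + 1)).getLast? = some (p n) := by
  rw [segList]
  split
  · assumption
  · exact List.getLast?_concat

lemma segList_prefix_succ {V : Type} (p : ℕ → V) (n : ℕ) :
    segList p n <+: segList p (n + 1) := by
  rw [segList]
  split
  · exact List.prefix_refl _
  · exact ⟨[p n], rfl⟩

lemma segList_prefix_le {V : Type} (p : ℕ → V) {n m : ℕ} (h : n ≤ m) :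
    segList p n <+: segList p m := by
  induction h with
  | refl => exact List.prefix_refl _
  | step h ih => exact ih.trans (segList_prefix_succ _ _)

namespace PreNaturalSpace

variable {V : Type} (P : PreNaturalSpace V)

lemma segList_chain {p : ℕ → V} (hp : ∀ n, P.refines (p (n + 1)) (p n)) (n : ℕ) :
    (segList p n).Chain' fun a b => P.strict b a := by
  induction n with
  | zero => exact List.isChain_nil
  | succ n ih =>
    rw [segList]
    split
    · exact ih
    · rename_i hne
      refine List.IsChain.append ih (List.isChain_singleton _) ?_
      intro x hx y hy
      have hy' : y = p n := (by simpa using hy : p n = y).symm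
      subst hy'
      cases n with
      | zero => simp [segList] at hx
      | succ k =>
        rw [segList_getLast] at hx
        have hx' : x = p k := (by simpa using hx : p k = x).symm
        subst hx'
        refine ⟨hp k, fun he => hne ?_⟩
        rw [segList_getLast, he]

/-- The canonical trail point `p♯` associated with a point `p`. -/
noncomputable def segListPt (p : P.Pt) : P.trailSpace.Pt := by
  refine ⟨fun n => ⟨segList p.1 n, P.segList_chain p.2.mono n⟩, ?_, ?_, ?_⟩
  · intro n
    exact segList_prefix_succ _ _
  · intro n
    match n with
    | 0 =>
      refine ⟨1, List.nil_prefix, fun he => ?_⟩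
      have := congrArg (fun t : P.Trail => t.1.getLast?) he
      simp only [segList_getLast p.1 0] at this
      simp [segList] at this
    | (k+1) =>
      obtain ⟨m, hkm, hstr⟩ := P.shrink_later p.2 k
      refine ⟨m + 1, segList_prefix_le _ (by omega), fun he => ?_⟩
      have := congrArg (fun t : P.Trail => t.1.getLast?) he
      simp only [segList_getLast] at this
      exact hstr.2 (by simpa using this)
  · rintro a b ⟨xa, hxa, xb, hxb, hab⟩
    obtain ⟨k, hk⟩ := p.2.decides xa xb hab
    rcases hk with hk | hk
    · exact ⟨k + 1, Or.inl ⟨p.1 k, by rw [segList_getLast]; rfl, xa, hxa, hk⟩⟩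
    · exact ⟨k + 1, Or.inr ⟨p.1 k, by rw [segList_getLast]; rfl, xb, hxb, hk⟩⟩

@[simp] lemma segListPt_coe (p : P.Pt) (n : ℕ) : ((P.segListPt p).1 n).1 = segList p.1 n := rfl

end PreNaturalSpace

/-! ### The limit point of a trail point -/

namespace PreNaturalSpace

variable {V : Type} (P : PreNaturalSpace V)

lemma trail_prefix {t : ℕ → P.Trail} (ht : P.trailSpace.IsPoint t) {n m : ℕ} (h : n ≤ m) :
    (t n).1 <+: (t m).1 :=
  P.trailSpace.refines_of_le ht.mono h

lemma trail_len_mono {t : ℕ → P.Trail} (ht : P.trailSpace.IsPoint t) {n m : ℕ} (h : n ≤ m) :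
    (t n).1.length ≤ (t m).1.length :=
  (P.trail_prefix ht h).length_le

lemma trail_len_unbounded {t : ℕ → P.Trail} (ht : P.trailSpace.IsPoint t) (L : ℕ) :
    ∃ m, L ≤ (t m).1.length := by
  induction L with
  | zero => exact ⟨0, Nat.zero_le _⟩
  | succ L ih =>
    obtain ⟨m, hm⟩ := ih
    obtain ⟨m', _, hstr⟩ := P.trailSpace.shrink_later ht m
    have hpre : (t m).1 <+: (t m').1 := hstr.1
    have hne : (t m).1 ≠ (t m').1 := fun he => hstr.2 (Subtype.ext he.symm)
    have hlt : (t m).1.length < (t m').1.length := by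
      rcases Nat.lt_or_ge (t m).1.length (t m').1.length with h | h
      · exact h
      · exact absurd (hpre.eq_of_length (le_antisymm hpre.length_le h)) hne
    exact ⟨m', by omega⟩

lemma entry_strict {l : List V} (h : l.Chain' fun a b => P.strict b a) {i j : ℕ}
    (hij : i < j) (hj : j < l.length) :
    P.strict (l[j]'hj) (l[i]'(lt_trans hij hj)) := by
  haveI : IsTrans V (fun x y : V => P.strict y x) :=
    ⟨fun _ _ _ h1 h2 => P.strict_trans_flip h1 h2⟩
  have hpw := List.isChain_iff_pairwise.mp h
  exact List.pairwise_iff_getElem.mp hpw i j _ hj hij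

lemma lastDot_of_ne_nil {m : V} {a : P.Trail} (h : a.1 ≠ []) (hl : a.1.length - 1 < a.1.length) :
    P.lastDot m a = a.1[a.1.length - 1]'hl := by
  rw [lastDot, List.getLast?_eq_getLast h, Option.getD_some, List.getLast_eq_getElem]

lemma lastDot_of_nil {m : V} {a : P.Trail} (h : a.1 = []) : P.lastDot m a = m := by
  rw [lastDot, h]
  rfl

variable {mP : V} (hmP : ∀ a, P.refines a mP) {t : ℕ → P.Trail}
  (ht : P.trailSpace.IsPoint t)

/-- The limit point of a trail point: the sequence of last dots. -/
noncomputable def piFun (mP : V) (t : ℕ → P.Trail) : ℕ → V := fun n => P.lastDot mP (t n)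

include hmP ht

lemma pi_mono : ∀ n, P.refines (P.piFun mP t (n + 1)) (P.piFun mP t n) := by
  intro n
  by_cases h : (t n).1 = []
  · show P.refines (P.lastDot mP (t (n + 1))) (P.lastDot mP (t n))
    rw [P.lastDot_of_nil h]
    exact hmP _
  · have hpre : (t n).1 <+: (t (n + 1)).1 := P.trail_prefix ht (Nat.le_succ n)
    have h2 : (t (n + 1)).1 ≠ [] := by
      intro he
      exact h (List.prefix_nil.mp (he ▸ hpre))
    show P.refines (P.lastDot mP (t (n + 1))) (P.lastDot mP (t n))
    rw [lastDot, lastDot, List.getLast?_eq_getLast h, List.getLast?_eq_getLast h2]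
    exact P.last_refines_of_prefix (t (n + 1)).2 hpre
      (by rw [List.getLast?_eq_getLast h2]; rfl) (by rw [List.getLast?_eq_getLast h]; rfl)

lemma pi_shrink : ∀ n, ∃ m, P.strict (P.piFun mP t m) (P.piFun mP t n) := by
  intro n
  set L := (t n).1.length with hL
  obtain ⟨m₀, hm₀⟩ := P.trail_len_unbounded ht (L + 2)
  refine ⟨max m₀ n, ?_⟩
  set m := max m₀ n
  have hlm : L + 2 ≤ (t m).1.length := le_trans hm₀ (P.trail_len_mono ht (le_max_left _ _))
  have hmne : (t m).1 ≠ [] := by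
    intro he
    rw [he] at hlm
    simp at hlm
  have hmlt : (t m).1.length - 1 < (t m).1.length := by omega
  rw [show P.piFun mP t m = P.lastDot mP (t m) from rfl, P.lastDot_of_ne_nil hmne hmlt]
  by_cases h : (t n).1 = []
  · rw [show P.piFun mP t n = P.lastDot mP (t n) from rfl, P.lastDot_of_nil h]
    have h0 : (0:ℕ) < (t m).1.length - 1 := by omega
    have hstr := P.entry_strict (t m).2 h0 hmlt
    exact P.strict_of_strict_refines hstr (hmP _)
  · have hlpos : 0 < L := List.length_pos_iff.mpr h
    have hnlt : L - 1 < L := by omega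
    rw [show P.piFun mP t n = P.lastDot mP (t n) from rfl, P.lastDot_of_ne_nil h hnlt]
    have hpre : (t n).1 <+: (t m).1 := P.trail_prefix ht (le_max_right _ _)
    have hget : (t n).1[L-1]'hnlt = (t m).1[L-1]'(by omega) := by
      rw [List.IsPrefix.getElem hpre]
    rw [hget]
    exact P.entry_strict (t m).2 (by omega) hmlt

lemma pi_decides : ∀ a b, P.apart a b →
    ∃ m, P.apart (P.piFun mP t m) a ∨ P.apart (P.piFun mP t m) b := by
  intro a b hab
  have hchain : ([a] : List V).Chain' fun x y => P.strict y x := List.isChain_singleton _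
  have hchainb : ([b] : List V).Chain' fun x y => P.strict y x := List.isChain_singleton _
  have htr : P.trailSpace.apart ⟨[a], hchain⟩ ⟨[b], hchainb⟩ :=
    ⟨a, rfl, b, rfl, hab⟩
  obtain ⟨m, hm⟩ := ht.decides _ _ htr
  have key : ∀ (c : V) (x y : V), x ∈ (t m).1.getLast? → y ∈ ([c] : List V).getLast? →
      P.apart x y → P.apart (P.piFun mP t m) c := by
    intro c x y hx hy h
    have hy' : c = y := by simpa using hy
    have hlx : P.piFun mP t m = x := by
      show P.lastDot mP (t m) = x
      rw [lastDot, Option.mem_def.mp hx]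
      rfl
    rw [hlx, hy']
    exact h
  rcases hm with ⟨x, hx, y, hy, h⟩ | ⟨x, hx, y, hy, h⟩
  · exact ⟨m, Or.inl (key a x y hx hy h)⟩
  · exact ⟨m, Or.inr (key b x y hx hy h)⟩

lemma pi_point : P.IsPoint (P.piFun mP t) :=
  ⟨P.pi_mono hmP ht, P.pi_shrink hmP ht, P.pi_decides hmP ht⟩

end PreNaturalSpace

namespace PreNaturalSpace

section Pi2

variable {V : Type} (P : PreNaturalSpace V) {mP : V} (hmP : ∀ a, P.refines a mP)
  {t s : ℕ → P.Trail} (ht : P.trailSpace.IsPoint t) (hs : P.trailSpace.IsPoint s)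

include hmP ht hs in
lemma trail_apart_of_pi_apart {n : ℕ}
    (h : P.apart (P.piFun mP t n) (P.piFun mP s n)) :
    ∃ m, P.trailSpace.apart (t m) (s m) := by
  obtain ⟨m₁, hm₁⟩ := P.trail_len_unbounded ht 1
  obtain ⟨m₂, hm₂⟩ := P.trail_len_unbounded hs 1
  set m := max (max m₁ m₂) n with hm
  have hnm : n ≤ m := le_max_right _ _
  have h1 : P.apart (P.piFun mP s n) (P.piFun mP t m) :=
    P.apart_le (P.pi_mono hmP ht) (P.apart_symm _ _ h) hnm
  have h2 : P.apart (P.piFun mP t m) (P.piFun mP s m) :=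
    P.apart_le (P.pi_mono hmP hs) (P.apart_symm _ _ h1) hnm
  have hne1 : (t m).1 ≠ [] := by
    have := le_trans hm₁ (P.trail_len_mono ht ((le_max_left m₁ m₂).trans (le_max_left _ n)))
    intro he; rw [he] at this; simp at this
  have hne2 : (s m).1 ≠ [] := by
    have := le_trans hm₂ (P.trail_len_mono hs ((le_max_right m₁ m₂).trans (le_max_left _ n)))
    intro he; rw [he] at this; simp at this
  refine ⟨m, P.piFun mP t m, ?_, P.piFun mP s m, ?_, h2⟩
  · show (t m).1.getLast? = some (P.piFun mP t m)
    rw [List.getLast?_eq_getLast hne1]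
    show _ = some (P.lastDot mP (t m))
    rw [lastDot, List.getLast?_eq_getLast hne1]
    rfl
  · show (s m).1.getLast? = some (P.piFun mP s m)
    rw [List.getLast?_eq_getLast hne2]
    show _ = some (P.lastDot mP (s m))
    rw [lastDot, List.getLast?_eq_getLast hne2]
    rfl

end Pi2

/-! ### Splicing two points -/

section Splice

variable {V : Type} (P : PreNaturalSpace V)

/-- The splice of two points: follow `y` up to index `n`, then continue with `z` from `j`. -/
def spliceFun (y z : ℕ → V) (n j : ℕ) : ℕ → V :=
  fun i => if i ≤ n then y i else z (j + (i - (n + 1)))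

variable {y z : ℕ → V} {n j : ℕ} (hy : P.IsPoint y) (hz : P.IsPoint z)
  (hzy : P.strict (z j) (y n))

include hy hz hzy

lemma splice_point : P.IsPoint (spliceFun y z n j) := by
  constructor
  · intro i
    rcases Nat.lt_trichotomy i n with h | h | h
    · simp only [spliceFun, if_pos (Nat.le_of_lt h), if_pos (Nat.succ_le_of_lt h)]
      exact hy.mono i
    · subst h
      simp only [spliceFun, if_pos (le_refl i), if_neg (by omega : ¬ i + 1 ≤ i)]
      have : i + 1 - (i + 1) = 0 := by omega
      rw [this]
      exact hzy.1
    · simp only [spliceFun, if_neg (by omega : ¬ i ≤ n), if_neg (by omega : ¬ i + 1 ≤ n)]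
      have : j + (i + 1 - (n + 1)) = j + (i - (n + 1)) + 1 := by omega
      rw [this]
      exact hz.mono _
  · intro i
    by_cases h : i ≤ n
    · obtain ⟨k, hk, hstr⟩ := P.shrink_later hz j
      refine ⟨n + 1 + (k - j), ?_⟩
      have he : spliceFun y z n j (n + 1 + (k - j)) = z k := by
        simp only [spliceFun, if_neg (by omega : ¬ n + 1 + (k - j) ≤ n)]
        congr 1
        omega
      rw [he]
      have h1 : P.strict (z k) (y n) := P.strict_of_strict_refines hstr hzy.1
      have h2 : spliceFun y z n j i = y i := if_pos h
      rw [h2]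
      exact P.strict_of_strict_refines h1 (P.refines_of_le hy.mono h)
    · obtain ⟨k, hk, hstr⟩ := P.shrink_later hz (j + (i - (n + 1)))
      refine ⟨n + 1 + (k - j), ?_⟩
      have hkj : j ≤ k := by omega
      have he : spliceFun y z n j (n + 1 + (k - j)) = z k := by
        simp only [spliceFun, if_neg (by omega : ¬ n + 1 + (k - j) ≤ n)]
        congr 1
        omega
      have he2 : spliceFun y z n j i = z (j + (i - (n + 1))) := if_neg h
      rw [he, he2]
      exact hstr
  · intro a b hab
    obtain ⟨k, hk⟩ := hz.decides a b hab
    have hKk : k ≤ max k j := le_max_left _ _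
    refine ⟨n + 1 + (max k j - j), ?_⟩
    have he : spliceFun y z n j (n + 1 + (max k j - j)) = z (max k j) := by
      simp only [spliceFun, if_neg (by omega : ¬ n + 1 + (max k j - j) ≤ n)]
      congr 1
      omega
    rw [he]
    rcases hk with hk | hk
    · exact Or.inl (P.apart_symm _ _ (P.apart_le hz.mono (P.apart_symm _ _ hk) hKk))
    · exact Or.inr (P.apart_symm _ _ (P.apart_le hz.mono (P.apart_symm _ _ hk) hKk))

lemma splice_equiv :
    P.pEquiv ⟨spliceFun y z n j, P.splice_point hy hz hzy⟩ ⟨z, hz⟩ := by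
  rintro ⟨i, hi⟩
  change P.apart (spliceFun y z n j i) (z i) at hi
  by_cases h : i ≤ n
  · have he : spliceFun y z n j i = y i := if_pos h
    rw [he] at hi
    have h1 : P.refines (z j) (y i) :=
      P.refines_trans _ _ _ hzy.1 (P.refines_of_le hy.mono h)
    rcases le_total i j with h2 | h2
    · exact P.not_apart_of_common h1 (P.refines_of_le hz.mono h2) hi
    · have h3 : P.refines (z i) (y i) :=
        P.refines_trans _ _ _ (P.refines_of_le hz.mono h2) h1
      exact P.not_apart_of_refines h3 (P.apart_symm _ _ hi)
  · have he : spliceFun y z n j i = z (j + (i - (n + 1))) := if_neg h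
    rw [he] at hi
    rcases le_total i (j + (i - (n + 1))) with h2 | h2
    · exact P.not_apart_of_refines (P.refines_of_le hz.mono h2) hi
    · exact P.not_apart_of_refines (P.refines_of_le hz.mono h2) (P.apart_symm _ _ hi)

lemma splice_agree : ∀ i ≤ n, spliceFun y z n j i = y i := fun _ hi => if_pos hi

end Splice

end PreNaturalSpace

/-! ### Natural morphism maps: basic properties -/

namespace RefMorphism

variable {V W : Type} {P : PreNaturalSpace V} {Q : PreNaturalSpace W}

lemma preserves_equiv (f : RefMorphism P Q) {p q : P.Pt} (h : P.pEquiv p q) :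
    Q.pEquiv (f.pointMap p) (f.pointMap q) :=
  fun hap => h (f.reflects_apart p.1 q.1 p.2 q.2 hap)

end RefMorphism

namespace PreNaturalSpace

section NMM

variable {V W : Type} {P : PreNaturalSpace V} {Q : PreNaturalSpace W}

lemma trail_pApart_to_pApart {p q : P.Pt} {tp tq : P.trailSpace.Pt}
    (htp : ∀ n, (tp.1 n).1 = segList p.1 n) (htq : ∀ n, (tq.1 n).1 = segList q.1 n)
    (h : P.trailSpace.pApart tp tq) : P.pApart p q := by
  obtain ⟨n, xa, hxa, xb, hxb, hab⟩ := h
  rw [htp] at hxa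
  rw [htq] at hxb
  cases n with
  | zero =>
    exact absurd hxa (by simp [segList])
  | succ k =>
    rw [segList_getLast] at hxa hxb
    have h1 : xa = p.1 k := (by simpa using hxa : p.1 k = xa).symm
    have h2 : xb = q.1 k := (by simpa using hxb : q.1 k = xb).symm
    subst h1; subst h2
    exact P.pApart_of_apart hab

lemma nmm_preserves_equiv {h : P.Pt → Q.Pt} (hn : P.IsNaturalMorphismMap Q h)
    {x y : P.Pt} (he : P.pEquiv x y) : Q.pEquiv (h x) (h y) := by
  rcases hn with ⟨f, hf⟩ | ⟨f, hf⟩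
  · rw [hf, hf]
    exact f.preserves_equiv he
  · obtain ⟨tx, htx, hgx⟩ := hf x
    obtain ⟨ty, hty, hgy⟩ := hf y
    rw [hgx, hgy]
    refine f.preserves_equiv (fun hap => ?_)
    exact he (trail_pApart_to_pApart htx hty hap)

lemma nmm_reflects {h : P.Pt → Q.Pt} (hn : P.IsNaturalMorphismMap Q h)
    {x y : P.Pt} (hap : Q.pApart (h x) (h y)) : P.pApart x y := by
  by_contra he
  exact nmm_preserves_equiv hn (he : P.pEquiv x y) hap

lemma nmm_dot_agree {h : P.Pt → Q.Pt} (hn : P.IsNaturalMorphismMap Q h)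
    {x y : P.Pt} {n : ℕ} (hxy : ∀ i ≤ n, x.1 i = y.1 i) : (h x).1 n = (h y).1 n := by
  rcases hn with ⟨f, hf⟩ | ⟨f, hf⟩
  · rw [hf, hf]
    show f.toFun (x.1 n) = f.toFun (y.1 n)
    rw [hxy n (le_refl n)]
  · obtain ⟨tx, htx, hgx⟩ := hf x
    obtain ⟨ty, hty, hgy⟩ := hf y
    rw [hgx, hgy]
    show f.toFun (tx.1 n) = f.toFun (ty.1 n)
    congr 1
    exact Subtype.ext (by rw [htx, hty]; exact segList_congr (fun i hi => hxy i (le_of_lt hi)))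

lemma nmm_continuous {h : P.Pt → Q.Pt} (hn : P.IsNaturalMorphismMap Q h) :
    Continuous h := by
  rw [continuous_def]
  intro U hU
  intro x hx y
  rcases hU (h x) hx (h y) with hap | ⟨m, hm⟩
  · exact Or.inl (nmm_reflects hn hap)
  · refine Or.inr ⟨m, ?_⟩
    rintro z ⟨jj, hj⟩
    set u : P.Pt := ⟨PreNaturalSpace.spliceFun y.1 z.1 m jj, P.splice_point y.2 z.2 hj⟩ with hu
    have h1 : (h u).1 m = (h y).1 m := nmm_dot_agree hn (P.splice_agree y.2 z.2 hj)
    have h2 : h u ∈ U := by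
      refine hm ?_
      show Q.begins (h u).1 ((h y).1 m)
      rw [← h1]
      exact Q.point_begins (h u).2 m
    have h3 : Q.pEquiv (h z) (h u) :=
      nmm_preserves_equiv hn (P.pEquiv_symm (P.splice_equiv y.2 z.2 hj))
    exact Q.open_saturated hU h2 h3

end NMM

end PreNaturalSpace

/-! ### The main construction: a trail morphism approximating a continuous map -/

namespace PreNaturalSpace

section NT

variable {V W' : Type} (P : PreNaturalSpace V) (Q' : PreNaturalSpace W')
  (F : P.Pt → Q'.Pt) (m' : W') (E : ℕ → Option (W' × W'))

/-- The head of a state list (the current dot of `W'`). -/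
def ntCur (m' : W') (L : List W') : W' := L.head?.getD m'

/-- The success condition for refining the current state at a new dot `α`. -/
def ntCond (b : W') (L : List W') (α : V) : Prop :=
  Q'.strict b (ntCur m' L) ∧
  (∀ z : P.Pt, P.begins z.1 α → F z ∈ Q'.barSet b) ∧
  (∀ j < L.length, ∀ cd : W' × W', E j = some cd → (Q'.apart b cd.1 ∨ Q'.apart b cd.2))

open Classical in
/-- The state machine: processes a reversed trail, refining the current dot whenever
possible. -/
noncomputable def ntState : List V → List W'
  | [] => [m']
  | α :: l =>
      if h : ∃ b, ntCond P Q' F m' E b (ntState l) α then h.choose :: ntState l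
      else ntState l

local notation "St" => ntState P Q' F m' E
local notation "Cur" => ntCur m'

lemma ntState_ne_nil : ∀ l, St l ≠ [] := by
  intro l
  induction l with
  | nil => simp [ntState]
  | cons α l ih =>
    rw [ntState]
    split
    · simp
    · exact ih

lemma ntCur_head (l : List V) : (St l).head? = some (Cur (St l)) := by
  cases h : St l with
  | nil => exact absurd h (ntState_ne_nil P Q' F m' E l)
  | cons a L => rfl

lemma ntState_suffix (u l : List V) : St l <:+ St (u ++ l) := by
  induction u with
  | nil => exact List.suffix_refl _
  | cons α u ih =>
    show St l <:+ St (α :: (u ++ l))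
    rw [ntState]
    split
    · exact ih.trans (List.suffix_cons _ _)
    · exact ih

lemma ntState_chain : ∀ l, (St l).Chain' fun a b => Q'.strict a b := by
  intro l
  induction l with
  | nil => exact List.isChain_singleton _
  | cons α l ih =>
    rw [ntState]
    split
    · rename_i h
      refine List.isChain_cons.mpr ⟨?_, ih⟩
      intro y hy
      have hspec := h.choose_spec
      rw [ntCur_head] at hy
      have : y = Cur (St l) := (by simpa using hy : Cur (St l) = y).symm
      rw [this]
      exact hspec.1
    · exact ih

lemma ntState_succ_len (α : V) (l : List V) :
    (St (α :: l)).length = (St l).length ∨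
      (St (α :: l)).length = (St l).length + 1 := by
  rw [ntState]
  split
  · exact Or.inr (by simp)
  · exact Or.inl rfl

lemma ntState_freeze {u l : List V}
    (h : (St (u ++ l)).length = (St l).length) :
    ∀ v, v <:+ u → St (v ++ l) = St l := by
  induction u with
  | nil =>
    intro v hv
    rw [List.suffix_nil.mp hv]
    rfl
  | cons α u ih =>
    have h' : (St (α :: (u ++ l))).length = (St l).length := h
    have hle : (St l).length ≤ (St (u ++ l)).length :=
      (ntState_suffix P Q' F m' E u l).length_le
    have hsuf2 : St (u ++ l) <:+ St (α :: (u ++ l)) :=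
      ntState_suffix P Q' F m' E [α] (u ++ l)
    have hle2 := hsuf2.length_le
    have hu : (St (u ++ l)).length = (St l).length := by omega
    have hfail : St (α :: (u ++ l)) = St (u ++ l) := by
      rw [ntState]
      split
      · exfalso
        rename_i hex
        have hx : (St (α :: (u ++ l))).length = (St (u ++ l)).length + 1 := by
          rw [ntState, dif_pos hex]
          simp
        omega
      · rfl
    intro v hv
    rcases List.suffix_cons_iff.mp hv with hv | hv
    · rw [hv]
      show St (α :: (u ++ l)) = St l
      rw [hfail]
      exact (ih hu) u (List.suffix_refl u)
    · exact ih hu v hv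

lemma ntState_success (α : V) (l : List V) (h : ∃ b, ntCond P Q' F m' E b (St l) α) :
    St (α :: l) = h.choose :: St l := dif_pos h

section Chain

variable {m'}

lemma cur_refines_of_suffix {L1 L2 : List W'} (hsuf : L1 <:+ L2)
    (hch : L2.Chain' fun a b => Q'.strict a b) (hne : L1 ≠ []) :
    Q'.refines (ntCur m' L2) (ntCur m' L1) := by
  obtain ⟨u, rfl⟩ := hsuf
  induction u with
  | nil => exact Q'.refines_refl _
  | cons a u ih =>
    rw [List.cons_append] at hch ⊢
    have hch' := List.isChain_cons.mp hch
    have hne2 : u ++ L1 ≠ [] := fun he => hne (List.append_eq_nil_iff.mp he).2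
    have hhd : (u ++ L1).head? = some ((u ++ L1).head hne2) := List.head?_eq_head _
    have h1 : Q'.strict a ((u ++ L1).head hne2) := hch'.1 _ hhd
    have h2 : ntCur m' (u ++ L1) = (u ++ L1).head hne2 := by
      rw [ntCur, hhd]
      rfl
    have h3 : ntCur m' (a :: (u ++ L1)) = a := rfl
    rw [h3]
    refine Q'.refines_trans _ _ _ ?_ (ih hch'.2)
    rw [h2]
    exact h1.1

lemma cur_strict_of_suffix_lt {L1 L2 : List W'} (hsuf : L1 <:+ L2)
    (hch : L2.Chain' fun a b => Q'.strict a b) (hne : L1 ≠ [])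
    (hlt : L1.length < L2.length) :
    Q'.strict (ntCur m' L2) (ntCur m' L1) := by
  obtain ⟨u, rfl⟩ := hsuf
  cases u with
  | nil => simp at hlt
  | cons a u =>
    rw [List.cons_append] at hch ⊢
    have hch' := List.isChain_cons.mp hch
    have hne2 : u ++ L1 ≠ [] := fun he => hne (List.append_eq_nil_iff.mp he).2
    have hhd : (u ++ L1).head? = some ((u ++ L1).head hne2) := List.head?_eq_head _
    have h1 : Q'.strict a ((u ++ L1).head hne2) := hch'.1 _ hhd
    have h2 : ntCur m' (u ++ L1) = (u ++ L1).head hne2 := by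
      rw [ntCur, hhd]
      rfl
    have h3 : ntCur m' (a :: (u ++ L1)) = a := rfl
    rw [h3]
    have h4 : Q'.strict a (ntCur m' (u ++ L1)) := by rw [h2]; exact h1
    exact Q'.strict_of_strict_refines h4
      (cur_refines_of_suffix Q' ⟨u, rfl⟩ hch'.2 hne)

end Chain

variable {P Q' F m' E}

lemma ntState_bar (hmQ' : ∀ a, Q'.refines a m') :
    ∀ l : List V, (l.Chain' fun a b => P.strict a b) →
      ∀ α ∈ l.head?, ∀ z : P.Pt, P.begins z.1 α → F z ∈ Q'.barSet (Cur (St l)) := by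
  intro l
  induction l with
  | nil => intro _ α hα; simp at hα
  | cons β l ih =>
    intro hch α hα z hz
    have hαβ : α = β := (by simpa using hα : β = α).symm
    subst hαβ
    rw [ntState]
    split
    · rename_i h
      have hspec := h.choose_spec
      exact hspec.2.1 z hz
    · cases l with
      | nil =>
        show F z ∈ Q'.barSet (Cur (St []))
        have : Cur (St ([] : List V)) = m' := rfl
        rw [this]
        exact Q'.mem_barSet_max hmQ' _
      | cons γ l' =>
        have hch' := List.isChain_cons.mp hch
        have hstr : P.strict α γ := hch'.1 γ rfl
        exact ih hch'.2 γ rfl z (P.begins_mono z.2 hstr.1 hz)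

lemma ntState_dec :
    ∀ l : List V, ∀ j, j + 1 < (St l).length → ∀ cd : W' × W', E j = some cd →
      (Q'.apart (Cur (St l)) cd.1 ∨ Q'.apart (Cur (St l)) cd.2) := by
  intro l
  induction l with
  | nil =>
    intro j hj
    simp [ntState] at hj
  | cons α l ih =>
    intro j hj cd hcd
    by_cases h : ∃ b, ntCond P Q' F m' E b (St l) α
    · rw [ntState_success P Q' F m' E α l h] at hj ⊢
      have hspec := h.choose_spec
      have hj' : j < (St l).length := by simpa using hj
      exact hspec.2.2 j hj' cd hcd
    · have hfail : St (α :: l) = St l := by rw [ntState]; exact dif_neg h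
      rw [hfail] at hj ⊢
      exact ih j hj cd hcd

end NT

end PreNaturalSpace

namespace PreNaturalSpace

section NTPoint

variable {V W' : Type} (P : PreNaturalSpace V) (Q' : PreNaturalSpace W')
  (F : P.Pt → Q'.Pt) (m' : W') (E : ℕ → Option (W' × W'))

local notation "St" => ntState P Q' F m' E

/-- The current dot along a trail point. -/
noncomputable def ntW (t : ℕ → P.Trail) (n : ℕ) : W' :=
  ntCur m' (St ((t n).1.reverse))

variable (hmQ' : ∀ a, Q'.refines a m')
  (hE1 : ∀ c d, Q'.apart c d → ∃ j, E j = some (c, d))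
  (hE2 : ∀ j c d, E j = some (c, d) → Q'.apart c d)
  (hFopen : ∀ b, IsOpen (F ⁻¹' Q'.barSet b))
  {mP : V} (hmP : ∀ a, P.refines a mP)
  {t : ℕ → P.Trail} (ht : P.trailSpace.IsPoint t)

include hE2 in
lemma nt_decide_upto (q : Q'.Pt) (s : ℕ) :
    ∃ M, ∀ M' ≥ M, ∀ j < s, ∀ cd : W' × W', E j = some cd →
      (Q'.apart (q.1 M') cd.1 ∨ Q'.apart (q.1 M') cd.2) := by
  induction s with
  | zero => exact ⟨0, fun M' _ j hj => by omega⟩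
  | succ s ih =>
    obtain ⟨M, hM⟩ := ih
    cases hEs : E s with
    | none =>
      refine ⟨M, fun M' hM' j hj cd hcd => ?_⟩
      rcases Nat.lt_or_ge j s with hjs | hjs
      · exact hM M' hM' j hjs cd hcd
      · have : j = s := by omega
        subst this
        rw [hEs] at hcd
        exact absurd hcd (by simp)
    | some cd₀ =>
      have hap : Q'.apart cd₀.1 cd₀.2 := hE2 s cd₀.1 cd₀.2 (by rw [hEs])
      obtain ⟨k, hk⟩ := q.2.decides cd₀.1 cd₀.2 hap
      refine ⟨max M k, fun M' hM' j hj cd hcd => ?_⟩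
      rcases Nat.lt_or_ge j s with hjs | hjs
      · exact hM M' (le_trans (le_max_left _ _) hM') j hjs cd hcd
      · have : j = s := by omega
        subst this
        rw [hEs] at hcd
        have hcd' : cd = cd₀ := by simpa using hcd.symm
        subst hcd'
        have hkM : k ≤ M' := le_trans (le_max_right _ _) hM'
        rcases hk with hk | hk
        · exact Or.inl (Q'.apart_symm _ _ (Q'.apart_le q.2.mono (Q'.apart_symm _ _ hk) hkM))
        · exact Or.inr (Q'.apart_symm _ _ (Q'.apart_le q.2.mono (Q'.apart_symm _ _ hk) hkM))

lemma nt_rl_chain (n : ℕ) : ((t n).1.reverse).Chain' fun a b => P.strict a b :=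
  List.isChain_reverse.mpr (t n).2

include ht in
lemma nt_rdecomp {n m : ℕ} (h : n ≤ m) :
    ∃ u, (t m).1.reverse = u ++ (t n).1.reverse := by
  obtain ⟨w, hw⟩ := P.trail_prefix ht h
  exact ⟨w.reverse, by rw [← hw, List.reverse_append]⟩

include hmP ht in
lemma nt_bar (hmQ'' : ∀ a, Q'.refines a m') (n : ℕ) :
    F ⟨P.piFun mP t, P.pi_point hmP ht⟩ ∈ Q'.barSet (ntW P Q' F m' E t n) := by
  by_cases h : (t n).1 = []
  · have : (t n).1.reverse = [] := by rw [h]; rfl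
    rw [ntW, this]
    exact Q'.mem_barSet_max hmQ'' _
  · have hne : (t n).1.reverse ≠ [] := by simpa using h
    have hhd : (t n).1.reverse.head? = some ((t n).1.getLast h) := by
      rw [← List.getLast?_reverse]
      rw [List.reverse_reverse]
      exact List.getLast?_eq_getLast h
    refine ntState_bar hmQ'' _ (nt_rl_chain (P := P) (t := t) n) _ hhd _ ?_
    have hlast : (t n).1.getLast h = P.piFun mP t n := by
      show _ = P.lastDot mP (t n)
      rw [lastDot, List.getLast?_eq_getLast h]
      rfl
    rw [hlast]
    exact P.point_begins (P.pi_point hmP ht) n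

include hmQ' hE1 hE2 hFopen hmP ht in
lemma ntState_grow (n₀ : ℕ) :
    ∃ m, n₀ ≤ m ∧ (St ((t n₀).1.reverse)).length < (St ((t m).1.reverse)).length := by
  by_contra hcon
  push_neg at hcon
  have hfrozen : ∀ m, n₀ ≤ m → (St ((t m).1.reverse)).length = (St ((t n₀).1.reverse)).length := by
    intro m hm
    obtain ⟨u, hu⟩ := nt_rdecomp P ht hm
    have h1 : (St ((t n₀).1.reverse)).length ≤ (St ((t m).1.reverse)).length := by
      rw [hu]
      exact (ntState_suffix P Q' F m' E u _).length_le
    exact le_antisymm (hcon m hm) h1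
  set x : P.Pt := ⟨P.piFun mP t, P.pi_point hmP ht⟩ with hx
  -- Step 1: F x is in the closure of the current dot at stage n₀
  have hbar : F x ∈ Q'.barSet (ntW P Q' F m' E t n₀) := nt_bar P Q' F m' E hmP ht hmQ' n₀
  obtain ⟨y, hyb, hyx⟩ := hbar
  obtain ⟨k₁, hk₁⟩ := hyb
  -- Step 3: pick a fine enough dot b on y
  obtain ⟨M, hM⟩ := nt_decide_upto Q' E hE2 y (St ((t n₀).1.reverse)).length
  set M' := max M k₁ with hM'
  set b := y.1 M' with hb
  have hbstrict : Q'.strict b (ntW P Q' F m' E t n₀) :=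
    Q'.strict_of_refines_strict (Q'.refines_of_le y.2.mono (le_max_right M k₁)) hk₁
  have hbdec : ∀ j < (St ((t n₀).1.reverse)).length, ∀ cd : W' × W', E j = some cd →
      (Q'.apart b cd.1 ∨ Q'.apart b cd.2) := hM M' (le_max_left _ _)
  have hFxb : F x ∈ Q'.barSet b := ⟨y, Q'.point_begins y.2 M', hyx⟩
  -- Step 4: use openness to find a neighborhood of x inside F ⁻¹ (bar b)
  have hopen := hFopen b
  rcases hopen x hFxb x with hap | ⟨k₀, hk₀⟩
  · exact absurd hap (P.pEquiv_refl x)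
  -- Step 5: find a late stage and a fine dot α
  set J := max (t n₀).1.length (t k₀).1.length with hJ
  obtain ⟨m₁, hm₁⟩ := P.trail_len_unbounded ht (J + 1)
  set m := max (max m₁ n₀) k₀ with hm
  have hlenm : J + 1 ≤ (t m).1.length :=
    le_trans hm₁ (P.trail_len_mono ht ((le_max_left m₁ n₀).trans (le_max_left _ k₀)))
  have hJlt : J < (t m).1.length := by omega
  set α := (t m).1[J]'hJlt with hα
  -- the new dot refines x at index k₀
  have hαx : P.refines α (x.1 k₀) := by
    show P.refines α (P.lastDot mP (t k₀))
    by_cases h : (t k₀).1 = []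
    · rw [P.lastDot_of_nil h]
      exact hmP _
    · have hlpos : 0 < (t k₀).1.length := List.length_pos_iff.mpr h
      have hklt : (t k₀).1.length - 1 < (t k₀).1.length := by omega
      rw [P.lastDot_of_ne_nil h hklt]
      have hkm : k₀ ≤ m := le_max_right _ _
      have hpre : (t k₀).1 <+: (t m).1 := P.trail_prefix ht hkm
      have hgl : (t k₀).1[(t k₀).1.length - 1]'hklt
          = (t m).1[(t k₀).1.length - 1]'(by have := hpre.length_le; omega) :=
        List.IsPrefix.getElem hpre hklt
      rw [hgl]
      have hlJ : (t k₀).1.length - 1 < J := by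
        have : (t k₀).1.length ≤ J := le_max_right _ _
        omega
      exact (P.entry_strict (t m).2 hlJ hJlt).1
  -- Step 6: decompose the reversed trail at stage m
  have hmn₀ : n₀ ≤ m := (le_max_right m₁ n₀).trans (le_max_left _ k₀)
  set A := ((t m).1.take J).reverse with hA
  have htakeJ : (t m).1.take (J + 1) = (t m).1.take J ++ [α] := by
    rw [List.take_succ, List.getElem?_eq_getElem hJlt]
    rfl
  have hA' : ((t m).1.take (J + 1)).reverse = α :: A := by
    rw [htakeJ, List.reverse_append]
    rfl
  have hApre : (t n₀).1.reverse <:+ A := by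
    rw [hA, List.reverse_suffix, List.prefix_take_iff]
    exact ⟨P.trail_prefix ht hmn₀, le_max_left _ _⟩
  obtain ⟨vA, hvA⟩ := hApre
  have hAsuf : α :: A <:+ (t m).1.reverse := by
    rw [← hA', List.reverse_suffix]
    exact List.take_prefix _ _
  obtain ⟨u', hu'⟩ := hAsuf
  set u := u' ++ (α :: vA) with hudef
  have hurl : u ++ (t n₀).1.reverse = (t m).1.reverse := by
    rw [hudef, ← hu', ← hvA]
    simp
  -- Step 7/8: the state is frozen between n₀ and m
  have hSm : (St (u ++ (t n₀).1.reverse)).length = (St ((t n₀).1.reverse)).length := by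
    rw [hurl]
    exact hfrozen m hmn₀
  have hfrA : St (vA ++ (t n₀).1.reverse) = St ((t n₀).1.reverse) :=
    ntState_freeze P Q' F m' E hSm vA ⟨u' ++ [α], by rw [hudef]; simp⟩
  have hfrA' : St ((α :: vA) ++ (t n₀).1.reverse) = St ((t n₀).1.reverse) :=
    ntState_freeze P Q' F m' E hSm (α :: vA) ⟨u', rfl⟩
  -- Step 9: but then the success condition holds at α, contradiction
  have hsucc : ∃ b', ntCond P Q' F m' E b' (St (vA ++ (t n₀).1.reverse)) α := by
    refine ⟨b, ?_, ?_, ?_⟩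
    · rw [hfrA]
      exact hbstrict
    · intro z hz
      exact hk₀ (P.begins_mono z.2 hαx hz)
    · rw [hfrA]
      exact hbdec
  have hlen1 : (St (α :: (vA ++ (t n₀).1.reverse))).length
      = (St (vA ++ (t n₀).1.reverse)).length + 1 := by
    rw [ntState_success P Q' F m' E _ _ hsucc]
    simp
  have hfrA'' : St (α :: (vA ++ (t n₀).1.reverse)) = St ((t n₀).1.reverse) := hfrA'
  rw [hfrA'', hfrA] at hlen1
  omega

include hmQ' hE1 hE2 hFopen hmP ht in
lemma ntState_unbounded (k : ℕ) : ∃ m, k < (St ((t m).1.reverse)).length := by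
  induction k with
  | zero =>
    refine ⟨0, ?_⟩
    have := ntState_ne_nil P Q' F m' E ((t 0).1.reverse)
    exact List.length_pos_iff.mpr this
  | succ k ih =>
    obtain ⟨m, hm⟩ := ih
    obtain ⟨m2, hm2, hlt⟩ := ntState_grow P Q' F m' E hmQ' hE1 hE2 hFopen hmP ht m
    exact ⟨m2, by omega⟩

include hmQ' hE1 hE2 hFopen hmP ht in
lemma ntW_point : Q'.IsPoint (ntW P Q' F m' E t) := by
  refine ⟨?_, ?_, ?_⟩
  · intro n
    obtain ⟨u, hu⟩ := nt_rdecomp P ht (Nat.le_succ n)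
    refine cur_refines_of_suffix Q' ?_ (ntState_chain P Q' F m' E _) (ntState_ne_nil P Q' F m' E _)
    rw [hu]
    exact ntState_suffix P Q' F m' E u _
  · intro n
    obtain ⟨m, hnm, hlt⟩ := ntState_grow P Q' F m' E hmQ' hE1 hE2 hFopen hmP ht n
    obtain ⟨u, hu⟩ := nt_rdecomp P ht hnm
    refine ⟨m, cur_strict_of_suffix_lt Q' ?_ (ntState_chain P Q' F m' E _)
      (ntState_ne_nil P Q' F m' E _) hlt⟩
    rw [hu]
    exact ntState_suffix P Q' F m' E u _
  · intro c d hcd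
    obtain ⟨j, hj⟩ := hE1 c d hcd
    obtain ⟨m, hm⟩ := ntState_unbounded P Q' F m' E hmQ' hE1 hE2 hFopen hmP ht (j + 1)
    exact ⟨m, ntState_dec _ j hm (c, d) hj⟩

include hmQ' hE1 hE2 hFopen hmP ht in
lemma ntW_equiv :
    Q'.pEquiv ⟨ntW P Q' F m' E t, ntW_point P Q' F m' E hmQ' hE1 hE2 hFopen hmP ht⟩
      (F ⟨P.piFun mP t, P.pi_point hmP ht⟩) := by
  rintro ⟨n, hn⟩
  change Q'.apart (ntW P Q' F m' E t n) ((F ⟨P.piFun mP t, P.pi_point hmP ht⟩).1 n) at hn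
  obtain ⟨y, hyb, hyx⟩ := nt_bar P Q' F m' E hmP ht hmQ' n
  obtain ⟨k, hk⟩ := hyb
  have h2 : Q'.apart ((F ⟨P.piFun mP t, P.pi_point hmP ht⟩).1 n) (y.1 k) :=
    Q'.apart_mono (y.1 k) (ntW P Q' F m' E t n) _ hk.1 (Q'.apart_symm _ _ hn)
  exact hyx (Q'.pApart_of_apart h2)

include hmQ' hE1 hE2 hFopen hmP ht in
lemma nt_reflects {s : ℕ → P.Trail} (hs : P.trailSpace.IsPoint s)
    (hFresp : ∀ x y : P.Pt, P.pEquiv x y → Q'.pEquiv (F x) (F y))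
    (h : ∃ n, Q'.apart (ntW P Q' F m' E t n) (ntW P Q' F m' E s n)) :
    ∃ n, P.trailSpace.apart (t n) (s n) := by
  set xt : P.Pt := ⟨P.piFun mP t, P.pi_point hmP ht⟩ with hxt
  set xs : P.Pt := ⟨P.piFun mP s, P.pi_point hmP hs⟩ with hxs
  have h1 : Q'.pApart ⟨ntW P Q' F m' E t, ntW_point P Q' F m' E hmQ' hE1 hE2 hFopen hmP ht⟩
      ⟨ntW P Q' F m' E s, ntW_point P Q' F m' E hmQ' hE1 hE2 hFopen hmP hs⟩ := h
  have h2 : Q'.pApart (F xt) (F xs) := by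
    have ha := Q'.pApart_congr_left h1 (ntW_equiv P Q' F m' E hmQ' hE1 hE2 hFopen hmP ht)
    exact Q'.pApart_congr_right ha (ntW_equiv P Q' F m' E hmQ' hE1 hE2 hFopen hmP hs)
  have h3 : P.pApart xt xs := by
    by_contra he
    exact hFresp xt xs he h2
  obtain ⟨n, hn⟩ := h3
  exact P.trail_apart_of_pi_apart hmP ht hs hn

lemma ntState_rev_chain (l : List V) :
    ((St l).reverse).Chain' fun a b => Q'.strict b a :=
  List.isChain_reverse.mpr (ntState_chain P Q' F m' E l)

/-- The trail of states along a trail point. -/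
noncomputable def ntXi (t : ℕ → P.Trail) (n : ℕ) : Q'.Trail :=
  ⟨(St ((t n).1.reverse)).reverse, ntState_rev_chain P Q' F m' E _⟩

lemma ntXi_last (l : List V) :
    ((St l).reverse).getLast? = some (ntCur m' (St l)) := by
  rw [List.getLast?_reverse]
  exact ntCur_head P Q' F m' E l

include hmQ' hE1 hE2 hFopen hmP ht in
lemma ntXi_point : Q'.trailSpace.IsPoint (ntXi P Q' F m' E t) := by
  refine ⟨?_, ?_, ?_⟩
  · intro n
    obtain ⟨u, hu⟩ := nt_rdecomp P ht (Nat.le_succ n)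
    have hsuf : St ((t n).1.reverse) <:+ St ((t (n + 1)).1.reverse) := by
      rw [hu]
      exact ntState_suffix P Q' F m' E u _
    obtain ⟨w, hw⟩ := hsuf
    refine ⟨w.reverse, ?_⟩
    show (St ((t n).1.reverse)).reverse ++ w.reverse = (St ((t (n + 1)).1.reverse)).reverse
    rw [← hw, List.reverse_append]
  · intro n
    obtain ⟨m, hnm, hlt⟩ := ntState_grow P Q' F m' E hmQ' hE1 hE2 hFopen hmP ht n
    obtain ⟨u, hu⟩ := nt_rdecomp P ht hnm
    have hsuf : St ((t n).1.reverse) <:+ St ((t m).1.reverse) := by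
      rw [hu]
      exact ntState_suffix P Q' F m' E u _
    obtain ⟨w, hw⟩ := hsuf
    refine ⟨m, ⟨w.reverse, ?_⟩, fun he => ?_⟩
    · show (St ((t n).1.reverse)).reverse ++ w.reverse = (St ((t m).1.reverse)).reverse
      rw [← hw, List.reverse_append]
    have := congrArg (fun q : Q'.Trail => q.1.length) he
    simp only [ntXi, List.length_reverse] at this
    omega
  · rintro a b ⟨xa, hxa, xb, hxb, hab⟩
    obtain ⟨m, hm⟩ :=
      (ntW_point P Q' F m' E hmQ' hE1 hE2 hFopen hmP ht).decides xa xb hab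
    rcases hm with hm | hm
    · exact ⟨m, Or.inl ⟨ntW P Q' F m' E t m, ntXi_last P Q' F m' E _, xa, hxa, hm⟩⟩
    · exact ⟨m, Or.inr ⟨ntW P Q' F m' E t m, ntXi_last P Q' F m' E _, xb, hxb, hm⟩⟩

end NTPoint

end PreNaturalSpace


namespace PreNaturalSpace

/-- A surjective-style enumeration of the apart pairs of a pre-natural space. -/
lemma exists_pair_enum {W' : Type} (Q' : PreNaturalSpace W') :
    ∃ E : ℕ → Option (W' × W'),
      (∀ c d, Q'.apart c d → ∃ j, E j = some (c, d)) ∧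
      ∀ j c d, E j = some (c, d) → Q'.apart c d := by
  haveI : Countable W' := Q'.countable'
  by_cases hne : Nonempty { cd : W' × W' // Q'.apart cd.1 cd.2 }
  · obtain ⟨e, he⟩ := exists_surjective_nat { cd : W' × W' // Q'.apart cd.1 cd.2 }
    refine ⟨fun n => some (e n).1, ?_, ?_⟩
    · intro c d hcd
      obtain ⟨j, hj⟩ := he ⟨(c, d), hcd⟩
      exact ⟨j, by simp only [hj]⟩
    · intro j c d hj
      have : (e j).1 = (c, d) := by simpa using hj
      have h2 := (e j).2
      rw [this] at h2
      exact h2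
  · refine ⟨fun _ => none, ?_, ?_⟩
    · intro c d hcd
      exact absurd ⟨⟨(c, d), hcd⟩⟩ hne
    · intro j c d hj
      simp at hj

end PreNaturalSpace
/-- classical: a continuous `≡`-respecting map from a natural space to
a basic neighborhood space is represented by a natural morphism, up to `≡`. -/
theorem stmt6 {V W : Type} (P : PreNaturalSpace V) (Q : PreNaturalSpace W)
    (hP : P.IsNaturalSpace) (hQ : Q.IsNaturalSpace) (hbn : Q.IsBasicNbhdSpace)
    (f : P.Pt → Q.Pt) (hf : Continuous f)
    (hresp : ∀ x y, P.pEquiv x y → Q.pEquiv (f x) (f y)) :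
    ∃ g : P.Pt → Q.Pt, P.IsNaturalMorphismMap Q g ∧ ∀ x, Q.pEquiv (f x) (g x) := by
  classical
  obtain ⟨mP, hmP⟩ := hP.1
  obtain ⟨W', Q', hQ'nat, hQ'bo, φ, ψ, hφm, hψm, hiso1, _hiso2⟩ := hbn
  obtain ⟨m', hm'⟩ := hQ'nat.1
  obtain ⟨E, hE1, hE2⟩ := Q'.exists_pair_enum
  set F : P.Pt → Q'.Pt := fun p => φ (f p) with hF
  have hφcont : Continuous φ := PreNaturalSpace.nmm_continuous hφm
  have hFcont : Continuous F := hφcont.comp hf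
  have hFopen : ∀ b, IsOpen (F ⁻¹' Q'.barSet b) := fun b => (hQ'bo b).preimage hFcont
  have hFresp : ∀ x y, P.pEquiv x y → Q'.pEquiv (F x) (F y) := fun x y h =>
    PreNaturalSpace.nmm_preserves_equiv hφm (hresp x y h)
  -- the canonical limit point of the trail point `x♯` is equivalent to `x`
  have hpiseg : ∀ x : P.Pt,
      P.pEquiv ⟨P.piFun mP ((P.segListPt x).1), P.pi_point hmP (P.segListPt x).2⟩ x := by
    intro x
    rintro ⟨n, hn⟩
    change P.apart (P.lastDot mP ((P.segListPt x).1 n)) (x.1 n) at hn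
    cases n with
    | zero =>
      have h0 : P.lastDot mP ((P.segListPt x).1 0) = mP := P.lastDot_of_nil rfl
      rw [h0] at hn
      exact P.not_apart_of_refines (hmP (x.1 0)) (P.apart_symm _ _ hn)
    | succ k =>
      have h0 : P.lastDot mP ((P.segListPt x).1 (k + 1)) = x.1 k := by
        show ((P.segListPt x).1 (k + 1)).1.getLast?.getD mP = x.1 k
        rw [P.segListPt_coe, segList_getLast]
        rfl
      rw [h0] at hn
      exact P.not_apart_of_refines (x.2.mono k) (P.apart_symm _ _ hn)
  -- the current-state point along `x♯` is equivalent to `F x`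
  have hcx : ∀ x : P.Pt,
      Q'.pEquiv ⟨PreNaturalSpace.ntW P Q' F m' E ((P.segListPt x).1),
        PreNaturalSpace.ntW_point P Q' F m' E hm' hE1 hE2 hFopen hmP (P.segListPt x).2⟩
        (F x) := by
    intro x
    have h1 := PreNaturalSpace.ntW_equiv P Q' F m' E hm' hE1 hE2 hFopen hmP (P.segListPt x).2
    have h2 : Q'.pEquiv (F ⟨P.piFun mP ((P.segListPt x).1), P.pi_point hmP (P.segListPt x).2⟩)
        (F x) := hFresp _ _ (hpiseg x)
    exact Q'.pEquiv_trans h1 h2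
  rcases hψm with ⟨ψ₀, hψ₀⟩ | ⟨ψ₁, hψ₁⟩
  · -- ψ is a refinement morphism
    set Θ : RefMorphism P.trailSpace Q :=
      { toFun := fun a => ψ₀.toFun (PreNaturalSpace.ntCur m'
          (PreNaturalSpace.ntState P Q' F m' E a.1.reverse))
        maps_points := fun tq htq => ψ₀.maps_points _
          (PreNaturalSpace.ntW_point P Q' F m' E hm' hE1 hE2 hFopen hmP htq)
        reflects_apart := by
          intro tq sq htq hsq hap
          have h1 := ψ₀.reflects_apart _ _
            (PreNaturalSpace.ntW_point P Q' F m' E hm' hE1 hE2 hFopen hmP htq)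
            (PreNaturalSpace.ntW_point P Q' F m' E hm' hE1 hE2 hFopen hmP hsq) hap
          exact PreNaturalSpace.nt_reflects P Q' F m' E hm' hE1 hE2 hFopen hmP htq hsq
            hFresp h1 } with hΘ
    refine ⟨fun p => Θ.pointMap (P.segListPt p), Or.inr ⟨Θ, fun p => ⟨P.segListPt p,
      fun n => rfl, rfl⟩⟩, ?_⟩
    intro x
    have h3 : Q.pEquiv (Θ.pointMap (P.segListPt x)) (ψ₀.pointMap (F x)) :=
      ψ₀.preserves_equiv (hcx x)
    have h5 : Q.pEquiv (ψ₀.pointMap (F x)) (f x) := by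
      have h := hiso1 (f x)
      rw [hψ₀ (φ (f x))] at h
      exact h
    exact Q.pEquiv_symm (Q.pEquiv_trans h3 h5)
  · -- ψ is a trail morphism
    set Θ : RefMorphism P.trailSpace Q :=
      { toFun := fun a => ψ₁.toFun ⟨(PreNaturalSpace.ntState P Q' F m' E a.1.reverse).reverse,
          PreNaturalSpace.ntState_rev_chain P Q' F m' E _⟩
        maps_points := fun tq htq => ψ₁.maps_points _
          (PreNaturalSpace.ntXi_point P Q' F m' E hm' hE1 hE2 hFopen hmP htq)
        reflects_apart := by
          intro tq sq htq hsq hap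
          have h1 := ψ₁.reflects_apart _ _
            (PreNaturalSpace.ntXi_point P Q' F m' E hm' hE1 hE2 hFopen hmP htq)
            (PreNaturalSpace.ntXi_point P Q' F m' E hm' hE1 hE2 hFopen hmP hsq) hap
          obtain ⟨n, xa, hxa, xb, hxb, hab⟩ := h1
          have ha : xa = PreNaturalSpace.ntW P Q' F m' E tq n := by
            have h : (PreNaturalSpace.ntXi P Q' F m' E tq n).1.getLast?
                = some (PreNaturalSpace.ntW P Q' F m' E tq n) :=
              PreNaturalSpace.ntXi_last P Q' F m' E _
            rw [Option.mem_def, h] at hxa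
            exact (Option.some_inj.mp hxa).symm
          have hb : xb = PreNaturalSpace.ntW P Q' F m' E sq n := by
            have h : (PreNaturalSpace.ntXi P Q' F m' E sq n).1.getLast?
                = some (PreNaturalSpace.ntW P Q' F m' E sq n) :=
              PreNaturalSpace.ntXi_last P Q' F m' E _
            rw [Option.mem_def, h] at hxb
            exact (Option.some_inj.mp hxb).symm
          subst ha hb
          exact PreNaturalSpace.nt_reflects P Q' F m' E hm' hE1 hE2 hFopen hmP htq hsq
            hFresp ⟨n, hab⟩ } with hΘ
    refine ⟨fun p => Θ.pointMap (P.segListPt p), Or.inr ⟨Θ, fun p => ⟨P.segListPt p,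
      fun n => rfl, rfl⟩⟩, ?_⟩
    intro x
    obtain ⟨T, hT, hTeq⟩ := hψ₁ (F x)
    have htrEq : Q'.trailSpace.pEquiv
        ⟨PreNaturalSpace.ntXi P Q' F m' E ((P.segListPt x).1),
          PreNaturalSpace.ntXi_point P Q' F m' E hm' hE1 hE2 hFopen hmP (P.segListPt x).2⟩
        T := by
      rintro ⟨n, xa, hxa, xb, hxb, hab⟩
      have ha : xa = PreNaturalSpace.ntW P Q' F m' E ((P.segListPt x).1) n := by
        have h : (PreNaturalSpace.ntXi P Q' F m' E ((P.segListPt x).1) n).1.getLast?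
            = some (PreNaturalSpace.ntW P Q' F m' E ((P.segListPt x).1) n) :=
          PreNaturalSpace.ntXi_last P Q' F m' E _
        rw [Option.mem_def, h] at hxa
        exact (Option.some_inj.mp hxa).symm
      rw [hT n] at hxb
      cases n with
      | zero =>
        rw [show segList (F x).1 0 = [] from rfl] at hxb
        simp at hxb
      | succ k =>
        rw [Option.mem_def, segList_getLast] at hxb
        have hb : xb = (F x).1 k := Option.some_inj.mp hxb.symm
        subst ha hb
        exact (hcx x) (Q'.pApart_of_apart hab)
    have h3 : Q.pEquiv (Θ.pointMap (P.segListPt x)) (ψ₁.pointMap T) :=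
      ψ₁.preserves_equiv htrEq
    have h5 : Q.pEquiv (ψ₁.pointMap T) (f x) := by
      have h := hiso1 (f x)
      rw [show ψ (φ (f x)) = ψ₁.pointMap T from hTeq] at h
      exact h
    exact Q.pEquiv_symm (Q.pEquiv_trans h3 h5)
end

section
/- The map α ↦ ᾱ := (ᾱ(0),ᾱ(1),ᾱ(2),…), where ᾱ(m) = (α(0),…,α(m−1)) is the initial segment of length m, sends each α ∈ ℕ^ℕ to a point of natural Baire space ℬ, and it induces a homeomorphism from ℕ^ℕ with the product topology onto the quotient space ℬ/≡. -/
/-! ## Natural Baire space and natural Cantor space -/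

/-- Natural Baire space: dots are finite sequences of naturals, `b ⊑ a` iff
`a` is an initial segment of `b`, apart iff incomparable. -/
noncomputable def BairePre : PreNaturalSpace (List ℕ) where
  countable' := inferInstance
  apart a b := ¬ a <+: b ∧ ¬ b <+: a
  refines a b := b <+: a
  apart_dec := Classical.decRel _
  refines_dec := Classical.decRel _
  apart_symm _ _ h := ⟨h.2, h.1⟩
  apart_irrefl a h := h.1 (List.prefix_refl a)
  apart_mono := by
    intro a b c hab hcb
    constructor
    · intro hca
      rcases List.prefix_or_prefix_of_prefix hca hab with h | h
      · exact hcb.1 h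
      · exact hcb.2 h
    · intro hac
      exact hcb.2 (hab.trans hac)
  refines_refl a := List.prefix_refl a
  refines_trans _ _ _ h1 h2 := h2.trans h1
  refines_antisymm _ _ h1 h2 := h2.eq_of_length (le_antisymm h2.length_le h1.length_le)

/-- Natural Cantor space: the restriction of natural Baire space to finite 0-1 sequences. -/
noncomputable def CantorPre : PreNaturalSpace ({ l : List ℕ | ∀ x ∈ l, x ≤ 1 }) :=
  BairePre.restrict { l : List ℕ | ∀ x ∈ l, x ≤ 1 }

/-- The sequence of initial segments of `α ∈ ℕ^ℕ`. -/
def initSegs (α : ℕ → ℕ) (n : ℕ) : List ℕ := (List.range n).map α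

/-! ### Auxiliary development for Statement 9 -/

section Stmt9Aux

lemma initSegs_length (α : ℕ → ℕ) (n : ℕ) : (initSegs α n).length = n := by
  simp [initSegs]

lemma initSegs_getElem (α : ℕ → ℕ) {n i : ℕ} (hi : i < (initSegs α n).length) :
    (initSegs α n)[i] = α i := by
  simp [initSegs]

lemma initSegs_prefix (α : ℕ → ℕ) {m n : ℕ} (h : m ≤ n) :
    initSegs α m <+: initSegs α n := by
  have : initSegs α m = (initSegs α n).take m := by
    rw [initSegs, initSegs, ← List.map_take, List.take_range, Nat.min_eq_left h]
  rw [this]; exact List.take_prefix m _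

lemma initSegs_ne (α β : ℕ → ℕ) {m n : ℕ} (h : m ≠ n) : initSegs α m ≠ initSegs β n := by
  intro he
  exact h (by rw [← initSegs_length α m, he, initSegs_length])

/-- If `b` is at most as long as `s` and not a prefix of `s`, then `s` is not a prefix of `b`. -/
lemma not_prefix_of_not_prefix {s b : List ℕ} (h : b.length ≤ s.length) (hb : ¬ b <+: s) :
    ¬ s <+: b := by
  intro hsb
  exact hb ((hsb.eq_of_length (le_antisymm hsb.length_le h)) ▸ List.prefix_refl s)

lemma baire_isPoint (α : ℕ → ℕ) : BairePre.IsPoint (initSegs α) := by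
  refine ⟨fun n => initSegs_prefix α n.le_succ, ?_, ?_⟩
  · intro n
    exact ⟨n + 1, initSegs_prefix α n.le_succ, initSegs_ne α α (Nat.succ_ne_self n)⟩
  · intro a b hab
    refine ⟨max a.length b.length, ?_⟩
    set s := initSegs α (max a.length b.length) with hs
    have hlen : s.length = max a.length b.length := initSegs_length _ _
    by_cases ha : a <+: s
    · right
      have hb : ¬ b <+: s := by
        intro hbs
        rcases List.prefix_or_prefix_of_prefix ha hbs with h | h
        · exact hab.1 h
        · exact hab.2 h
      exact ⟨not_prefix_of_not_prefix (hlen ▸ le_max_right _ _) hb, hb⟩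
    · left
      exact ⟨not_prefix_of_not_prefix (hlen ▸ le_max_left _ _) ha, ha⟩

/-- The point of natural Baire space given by `α ∈ ℕ^ℕ`. -/
noncomputable def FB (α : ℕ → ℕ) : BairePre.Pt := ⟨initSegs α, baire_isPoint α⟩

lemma pt_prefix (p : BairePre.Pt) {m k : ℕ} (h : m ≤ k) : p.1 m <+: p.1 k :=
  BairePre.refines_of_le p.2.mono h

lemma baire_strict_length {a b : List ℕ} (h : BairePre.strict a b) : b.length < a.length := by
  have hp : b <+: a := h.1
  exact lt_of_le_of_ne hp.length_le (fun he => h.2 (hp.eq_of_length he).symm)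

lemma pt_len_unbounded (p : BairePre.Pt) (i : ℕ) : ∃ m, i < (p.1 m).length := by
  induction i with
  | zero =>
    obtain ⟨m, hm⟩ := p.2.shrink 0
    exact ⟨m, lt_of_le_of_lt (Nat.zero_le _) (baire_strict_length hm)⟩
  | succ i ih =>
    obtain ⟨m, hm⟩ := ih
    obtain ⟨k, hk⟩ := p.2.shrink m
    exact ⟨k, lt_of_le_of_lt hm (baire_strict_length hk)⟩

/-- The element of `ℕ^ℕ` determined by a point of natural Baire space. -/
noncomputable def ptFun (p : BairePre.Pt) (i : ℕ) : ℕ :=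
  (p.1 (pt_len_unbounded p i).choose).getD i 0

lemma ptFun_spec (p : BairePre.Pt) {m i : ℕ} (h : i < (p.1 m).length) :
    (p.1 m)[i] = ptFun p i := by
  have hik : i < (p.1 (pt_len_unbounded p i).choose).length := (pt_len_unbounded p i).choose_spec
  set k := (pt_len_unbounded p i).choose
  have h1 : (p.1 m)[i] = (p.1 (max m k))[i]'(h.trans_le (pt_prefix p (le_max_left m k)).length_le) :=
    (pt_prefix p (le_max_left m k)).getElem h
  have h2 : (p.1 k)[i] = (p.1 (max m k))[i]'(hik.trans_le (pt_prefix p (le_max_right m k)).length_le) :=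
    (pt_prefix p (le_max_right m k)).getElem hik
  rw [h1, ptFun, List.getD_eq_getElem _ 0 hik, h2]

lemma dot_eq_initSegs (p : BairePre.Pt) (m : ℕ) :
    p.1 m = initSegs (ptFun p) (p.1 m).length := by
  apply List.ext_getElem (by rw [initSegs_length])
  intro i h1 h2
  rw [initSegs_getElem (ptFun p) h2]
  exact ptFun_spec p h1

lemma pEquiv_FB (p : BairePre.Pt) : BairePre.pEquiv p (FB (ptFun p)) := by
  rintro ⟨n, hn⟩
  have hd := dot_eq_initSegs p n
  have hFB : (FB (ptFun p)).1 n = initSegs (ptFun p) n := rfl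
  rw [hd, hFB] at hn
  rcases le_total (p.1 n).length n with h | h
  · exact hn.1 (initSegs_prefix _ h)
  · exact hn.2 (initSegs_prefix _ h)

lemma eq_of_pEquiv_FB {α β : ℕ → ℕ} (h : BairePre.pEquiv (FB α) (FB β)) : α = β := by
  funext i
  by_contra hne
  apply h
  refine ⟨i + 1, ?_, ?_⟩
  · intro hp
    have hp' : initSegs α (i + 1) <+: initSegs β (i + 1) := hp
    have heq := hp'.eq_of_length (by rw [initSegs_length, initSegs_length])
    have hl : i < (initSegs α (i + 1)).length := by rw [initSegs_length]; omega
    refine hne ?_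
    calc α i = (initSegs α (i + 1))[i]'hl := (initSegs_getElem α hl).symm
      _ = (initSegs β (i + 1))[i]'(heq ▸ hl) := List.getElem_of_eq heq hl
      _ = β i := initSegs_getElem β _
  · intro hp
    have hp' : initSegs β (i + 1) <+: initSegs α (i + 1) := hp
    have heq := hp'.eq_of_length (by rw [initSegs_length, initSegs_length])
    have hl : i < (initSegs β (i + 1)).length := by rw [initSegs_length]; omega
    refine hne ?_
    calc α i = (initSegs α (i + 1))[i]'(heq ▸ hl) := (initSegs_getElem α _).symm
      _ = (initSegs β (i + 1))[i]'hl := (List.getElem_of_eq heq hl).symm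
      _ = β i := initSegs_getElem β _

lemma pApart_of_apart {V : Type} (P : PreNaturalSpace V) (p q : P.Pt) {a b : ℕ}
    (h : P.apart (p.1 a) (q.1 b)) : P.pApart p q := by
  refine ⟨max a b, ?_⟩
  have h1 : P.apart (p.1 a) (q.1 (max a b)) :=
    P.apart_mono _ _ _ (P.refines_of_le q.2.mono (le_max_right a b)) h
  have h2 : P.apart (q.1 (max a b)) (p.1 (max a b)) :=
    P.apart_mono _ _ _ (P.refines_of_le p.2.mono (le_max_left a b)) (P.apart_symm _ _ h1)
  exact P.apart_symm _ _ h2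

lemma ptFun_respects : ∀ p q : BairePre.Pt, BairePre.pEquiv p q → ptFun p = ptFun q := by
  intro p q hpq
  apply eq_of_pEquiv_FB
  exact BairePre.pEquiv_trans
    (BairePre.pEquiv_trans (BairePre.pEquiv_symm (pEquiv_FB p)) hpq) (pEquiv_FB q)

/-- The bijection `ℕ^ℕ ≃ ℬ/≡` induced by `α ↦ ᾱ`. -/
noncomputable def baireEquiv : (ℕ → ℕ) ≃ Quotient BairePre.ptSetoid where
  toFun α := Quotient.mk BairePre.ptSetoid (FB α)
  invFun := Quotient.lift ptFun ptFun_respects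
  left_inv α := eq_of_pEquiv_FB (BairePre.pEquiv_symm (pEquiv_FB (FB α)))
  right_inv q := Quotient.inductionOn q fun p =>
    Quotient.sound (BairePre.pEquiv_symm (pEquiv_FB p))

lemma continuous_baire_toFun :
    Continuous fun α : ℕ → ℕ => Quotient.mk BairePre.ptSetoid (FB α) := by
  rw [continuous_def]
  intro U hU
  have hU' : BairePre.NatOpen (Quotient.mk BairePre.ptSetoid ⁻¹' U) :=
    hU.preimage continuous_quotient_mk'
  rw [isOpen_iff_forall_mem_open]
  intro α hα
  rcases hU' (FB α) hα (FB α) with h | ⟨m, hm⟩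
  · exact absurd h (BairePre.pEquiv_refl (FB α))
  refine ⟨{β : ℕ → ℕ | ∀ i ∈ Finset.range m, β i = α i}, ?_, ?_, ?_⟩
  · intro β hβ
    apply hm
    show BairePre.begins (initSegs β) (initSegs α m)
    have hseg : initSegs α m = initSegs β m := by
      apply List.ext_getElem (by rw [initSegs_length, initSegs_length])
      intro i h1 h2
      rw [initSegs_getElem, initSegs_getElem]
      exact (hβ i (Finset.mem_range.mpr (by rw [initSegs_length] at h1; exact h1))).symm
    refine ⟨m + 1, ?_, initSegs_ne β α (Nat.succ_ne_self m)⟩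
    show initSegs α m <+: initSegs β (m + 1)
    rw [hseg]
    exact initSegs_prefix β m.le_succ
  · have heq : {β : ℕ → ℕ | ∀ i ∈ Finset.range m, β i = α i}
        = ⋂ i ∈ Finset.range m, {β : ℕ → ℕ | β i = α i} := by
      ext β; simp
    rw [heq]
    refine isOpen_biInter_finset fun i _ => ?_
    have hpe : {β : ℕ → ℕ | β i = α i} = (fun β : ℕ → ℕ => β i) ⁻¹' {α i} := rfl
    rw [hpe]
    exact (isOpen_discrete {α i}).preimage (continuous_apply i)
  · intro i _
    rfl

lemma continuous_ptFun : Continuous (ptFun : BairePre.Pt → ℕ → ℕ) := by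
  apply continuous_pi
  intro i
  rw [continuous_discrete_rng]
  intro v
  show BairePre.NatOpen {p : BairePre.Pt | ptFun p i = v}
  intro x hx y
  obtain ⟨m, hm⟩ := pt_len_unbounded y i
  by_cases hv : (y.1 m)[i] = v
  · right
    refine ⟨m, ?_⟩
    rintro z ⟨k, hk, -⟩
    have hik : i < (z.1 k).length := hm.trans_le (List.IsPrefix.length_le hk)
    show ptFun z i = v
    rw [← ptFun_spec z hik, ← List.IsPrefix.getElem hk hm, hv]
  · left
    obtain ⟨k, hk⟩ := pt_len_unbounded x i
    have hxv : (x.1 k)[i] = v := (ptFun_spec x hk).trans hx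
    apply pApart_of_apart BairePre y x (a := m) (b := k)
    constructor
    · intro hp
      exact hv ((List.IsPrefix.getElem hp hm).trans hxv)
    · intro hp
      exact hv (((List.IsPrefix.getElem hp hk).symm.trans hxv))

/-- The homeomorphism `ℕ^ℕ ≃ₜ ℬ/≡`. -/
noncomputable def baireHomeo : (ℕ → ℕ) ≃ₜ Quotient BairePre.ptSetoid where
  toEquiv := baireEquiv
  continuous_toFun := continuous_baire_toFun
  continuous_invFun := continuous_ptFun.quotient_lift ptFun_respects

end Stmt9Aux

/-- `α ↦ ᾱ` (initial segments) sends each `α ∈ ℕ^ℕ` to a point of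
natural Baire space, and induces a homeomorphism from `ℕ^ℕ` (product topology)
onto `ℬ/≡`. -/
theorem stmt9 :
    (∀ α : ℕ → ℕ, BairePre.IsPoint (initSegs α)) ∧
    ∃ h : (ℕ → ℕ) ≃ₜ Quotient BairePre.ptSetoid,
      ∀ (α : ℕ → ℕ) (p : BairePre.Pt), (∀ n, p.1 n = initSegs α n) →
        h α = Quotient.mk BairePre.ptSetoid p := by
  refine ⟨baire_isPoint, baireHomeo, ?_⟩
  intro α p hp
  have hpe : p = FB α := Subtype.ext (funext hp)
  rw [hpe]
  rfl
end
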